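/- Dilation of Gabor type frames: Let λ ∈ ℂ with |λ| = 1, let U, V be unitary operators on a complex Hilbert space H with UV = λVU, and let η ∈ H be such that {U^m V^n η : m, n ∈ ℤ} is a normalized tight frame for H. Then there exist a complex Hilbert space H₁, an isometric linear embedding W : H → H₁, unitary operators U₁, V₁ on H₁ with U₁V₁ = λV₁U₁, and a vector ξ ∈ H₁ such that: (i) {U₁^m V₁^n ξ : m, n ∈ ℤ} is an orthonormal basis of H₁; (ii) W U = U₁ W and W V = V₁ W; (iii) the orthogonal projection P of H₁ onto the range of W commutes with U₁ and with V₁; (iv) P ξ = W η. In particular, P U₁^m V₁^n ξ = W U^m V^n η for all m, n ∈ ℤ. -/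

import Mathlib

open scoped InnerProductSpace ComplexOrder Classical
open Complex

noncomputable section

/-- A kernel `K : X × X → ℂ` is positive definite if every finite quadratic form
`∑ i j, K (x i) (x j) * ξ i * conj (ξ j)` is a nonnegative real number
(expressed via the partial order on `ℂ`). -/
def IsPosDefKernel {X : Type*} (K : X → X → ℂ) : Prop :=
  ∀ (n : ℕ) (x : Fin n → X) (ξ : Fin n → ℂ),
    0 ≤ ∑ i, ∑ j, K (x i) (x j) * ξ i * (starRingEnd ℂ) (ξ j)

/-- `(H, v)` is a Kolmogorov representation of the kernel `K`: the span of the range of `v`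
is dense and inner products of the `v x` reproduce `K`.  Mathlib's inner product is
conjugate-linear in the first variable, while the paper's is conjugate-linear in the second,
so the paper's `⟨v x, v y⟩ = K x y` reads `⟪v y, v x⟫_ℂ = K x y` here. -/
def IsKolmogorovRep {X : Type*} (K : X → X → ℂ) (H : Type*) [NormedAddCommGroup H]
    [InnerProductSpace ℂ H] (v : X → H) : Prop :=
  Dense (↑(Submodule.span ℂ (Set.range v)) : Set H) ∧
    ∀ x y : X, ⟪v y, v x⟫_ℂ = K x y

/-- `L² ≤ c K K'` in the sense of Dutkay. -/
def KernelSqLE {X : Type*} (L K K' : X → X → ℂ) (c : ℝ) : Prop :=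
  ∀ (m n : ℕ) (x : Fin m → X) (y : Fin n → X) (ξ : Fin m → ℂ) (η : Fin n → ℂ),
    ‖∑ i, ∑ j, L (x i) (y j) * ξ i * (starRingEnd ℂ) (η j)‖ ^ 2 ≤
      c * (∑ i, ∑ i', K (x i) (x i') * ξ i * (starRingEnd ℂ) (ξ i')).re *
        (∑ j, ∑ j', K' (y j) (y j') * η j * (starRingEnd ℂ) (η j')).re

/-- `K' ≤ c K` for kernels, via the partial order on `ℂ`. -/
def KernelLE {X : Type*} (K' K : X → X → ℂ) (c : ℝ) : Prop :=
  ∀ (n : ℕ) (x : Fin n → X) (ξ : Fin n → ℂ),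
    ∑ i, ∑ j, K' (x i) (x j) * ξ i * (starRingEnd ℂ) (ξ j) ≤
      (c : ℂ) * ∑ i, ∑ j, K (x i) (x j) * ξ i * (starRingEnd ℂ) (ξ j)

/-- A bounded operator is positive if `⟨S v, v⟩ ≥ 0` for all `v` (paper convention;
in Mathlib's convention this is `0 ≤ ⟪v, S v⟫`). -/
def IsPositiveOp {H : Type*} [NormedAddCommGroup H] [InnerProductSpace ℂ H]
    (S : H →L[ℂ] H) : Prop :=
  ∀ v : H, 0 ≤ ⟪v, S v⟫_ℂ

/-- A family of vectors is a normalized tight frame. -/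
def IsNormalizedTightFrame {H : Type*} [NormedAddCommGroup H] [InnerProductSpace ℂ H]
    {ι : Type*} (v : ι → H) : Prop :=
  ∀ f : H, ∑' i, ‖⟪v i, f⟫_ℂ‖ ^ 2 = ‖f‖ ^ 2

/-- `P` is the orthogonal projection onto the set `S`: idempotent, self-adjoint,
with range `S`. -/
def IsOrthProjectionOnto {H : Type*} [NormedAddCommGroup H] [InnerProductSpace ℂ H]
    (P : H →L[ℂ] H) (S : Set H) : Prop :=
  (∀ v, P (P v) = P v) ∧ (∀ v w : H, ⟪P v, w⟫_ℂ = ⟪v, P w⟫_ℂ) ∧ Set.range P = S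

/-- The two covariance relations for a Gabor-type kernel on `ℤ²`. -/
def GaborCovariant (lam : ℂ) (K : ℤ × ℤ → ℤ × ℤ → ℂ) : Prop :=
  (∀ m n m' n' : ℤ, K (m + 1, n) (m' + 1, n') = K (m, n) (m', n')) ∧
  (∀ m n m' n' : ℤ, K (m, n + 1) (m', n' + 1) = lam ^ (m - m') * K (m, n) (m', n'))

/-- The vectors `U^m V^n ξ₀` of a Gabor type unitary system. -/
def gaborVec {H : Type*} [NormedAddCommGroup H] [InnerProductSpace ℂ H] [CompleteSpace H]
    (U V : unitary (H →L[ℂ] H)) (ξ₀ : H) (p : ℤ × ℤ) : H :=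
  ((U ^ p.1 * V ^ p.2 : unitary (H →L[ℂ] H)) : H →L[ℂ] H) ξ₀

/-- `(H, U, V, ξ₀)` is the Gabor type cyclic system associated to the kernel `K` and the
unimodular scalar `lam` : `U V = lam V U`, the vectors `U^m V^n ξ₀` span a dense subspace,
and their inner products reproduce `K`. -/
def IsGaborSystem {H : Type*} [NormedAddCommGroup H] [InnerProductSpace ℂ H] [CompleteSpace H]
    (lam : ℂ) (K : ℤ × ℤ → ℤ × ℤ → ℂ) (U V : unitary (H →L[ℂ] H)) (ξ₀ : H) : Prop :=
  ((U : H →L[ℂ] H) * (V : H →L[ℂ] H) = lam • ((V : H →L[ℂ] H) * (U : H →L[ℂ] H))) ∧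
  Dense (↑(Submodule.span ℂ (Set.range (gaborVec U V ξ₀))) : Set H) ∧
  ∀ m n m' n' : ℤ,
    ⟪gaborVec U V ξ₀ (m', n'), gaborVec U V ξ₀ (m, n)⟫_ℂ = K (m, n) (m', n')

universe u

open scoped ENNReal

namespace GaborAux







variable {I : Type*}

lemma memℓp_two_of_summable {f : I → ℂ} (h : Summable fun i => ‖f i‖ ^ (2:ℕ)) :
    Memℓp f 2 := by
  apply memℓp_gen
  have h2 : (2:ℝ≥0∞).toReal = (2:ℝ) := by simp
  rw [h2]
  simpa [Real.rpow_natCast] using h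

lemma summable_norm_sq (f : lp (fun _ : I => ℂ) 2) :
    Summable fun i => ‖f i‖ ^ (2:ℕ) := by
  have := Memℓp.summable (p := (2:ℝ≥0∞)) (by norm_num) f.2
  have h2 : (2:ℝ≥0∞).toReal = (2:ℝ) := by simp
  rw [h2] at this
  simpa [Real.rpow_natCast] using this

lemma norm_sq_eq_tsum (f : lp (fun _ : I => ℂ) 2) :
    ‖f‖ ^ (2:ℕ) = ∑' i, ‖f i‖ ^ (2:ℕ) := by
  have := lp.norm_rpow_eq_tsum (p := (2:ℝ≥0∞)) (by norm_num) f
  have h2 : (2:ℝ≥0∞).toReal = (2:ℝ) := by simp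
  rw [h2] at this
  simpa [Real.rpow_natCast] using this

/-- the weighted shift function -/
def wsFun (σ : I ≃ I) (c : I → ℂ) (g : I → ℂ) : I → ℂ := fun i => c i * g (σ i)

lemma memℓp_wsFun (σ : I ≃ I) (c : I → ℂ) (hc : ∀ i, ‖c i‖ = 1)
    (g : lp (fun _ : I => ℂ) 2) : Memℓp (wsFun σ c g) 2 := by
  apply memℓp_two_of_summable
  have : Summable fun i => ‖g (σ i)‖ ^ (2:ℕ) := (σ.summable_iff).2 (summable_norm_sq g)
  simpa [wsFun, norm_mul, hc] using this

/-- the weighted shift as a linear map on `ℓ²` -/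
def wsL (σ : I ≃ I) (c : I → ℂ) (hc : ∀ i, ‖c i‖ = 1) :
    lp (fun _ : I => ℂ) 2 →ₗ[ℂ] lp (fun _ : I => ℂ) 2 where
  toFun g := ⟨wsFun σ c g, memℓp_wsFun σ c hc g⟩
  map_add' g h := by
    apply Subtype.ext
    funext i
    simp only [lp.coeFn_add, Pi.add_apply, wsFun, mul_add]
  map_smul' a g := by
    apply Subtype.ext
    funext i
    simp [wsFun, lp.coeFn_smul]
    ring

@[simp] lemma wsL_apply (σ : I ≃ I) (c : I → ℂ) (hc : ∀ i, ‖c i‖ = 1)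
    (g : lp (fun _ : I => ℂ) 2) (i : I) :
    (wsL σ c hc g : I → ℂ) i = c i * g (σ i) := rfl

lemma hc_conj {c : I → ℂ} (hc : ∀ i, ‖c i‖ = 1) (σ : I ≃ I) :
    ∀ i, ‖(starRingEnd ℂ) (c (σ.symm i))‖ = 1 := fun i => by
  simp [hc]

/-- the weighted shift as a linear isometry equivalence -/
def wsE (σ : I ≃ I) (c : I → ℂ) (hc : ∀ i, ‖c i‖ = 1) :
    lp (fun _ : I => ℂ) 2 ≃ₗᵢ[ℂ] lp (fun _ : I => ℂ) 2 where
  toLinearEquiv := LinearEquiv.ofLinear (wsL σ c hc)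
    (wsL σ.symm (fun i => (starRingEnd ℂ) (c (σ.symm i))) (hc_conj hc σ))
    (by
      ext g i
      have h1 : c i * (starRingEnd ℂ) (c i) = 1 := by
        rw [mul_comm, Complex.conj_mul']
        rw [hc i]; norm_num
      simp only [LinearMap.comp_apply, LinearMap.id_apply, wsL_apply]
      calc c i * ((starRingEnd ℂ) (c (σ.symm (σ i))) * g (σ.symm (σ i)))
          = c i * ((starRingEnd ℂ) (c i) * g i) := by rw [σ.symm_apply_apply]
        _ = g i := by rw [← mul_assoc, h1, one_mul])
    (by
      ext g i
      have h1 : (starRingEnd ℂ) (c (σ.symm i)) * c (σ.symm i) = 1 := by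
        rw [Complex.conj_mul']
        rw [hc (σ.symm i)]; norm_num
      simp only [LinearMap.comp_apply, LinearMap.id_apply, wsL_apply]
      calc (starRingEnd ℂ) (c (σ.symm i)) * (c (σ.symm i) * g (σ (σ.symm i)))
          = (starRingEnd ℂ) (c (σ.symm i)) * (c (σ.symm i) * g i) := by rw [σ.apply_symm_apply]
        _ = g i := by rw [← mul_assoc, h1, one_mul])
  norm_map' := by
    intro g
    show ‖wsL σ c hc g‖ = ‖g‖
    have hsq : ‖wsL σ c hc g‖ ^ (2:ℕ) = ‖g‖ ^ (2:ℕ) := by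
      rw [norm_sq_eq_tsum, norm_sq_eq_tsum]
      have : ∀ i, ‖(wsL σ c hc g : I → ℂ) i‖ ^ (2:ℕ) = ‖g (σ i)‖ ^ (2:ℕ) := by
        intro i; simp [norm_mul, hc i]
      rw [tsum_congr this]
      exact σ.tsum_eq (fun i => ‖g i‖ ^ (2:ℕ))
    calc ‖wsL σ c hc g‖ = Real.sqrt (‖wsL σ c hc g‖ ^ (2:ℕ)) := (Real.sqrt_sq (norm_nonneg _)).symm
      _ = Real.sqrt (‖g‖ ^ (2:ℕ)) := by rw [hsq]
      _ = ‖g‖ := Real.sqrt_sq (norm_nonneg _)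



variable {E E' : Type*} [NormedAddCommGroup E] [InnerProductSpace ℂ E] [CompleteSpace E]
  [NormedAddCommGroup E'] [InnerProductSpace ℂ E'] [CompleteSpace E']

lemma u_mul_apply (u v : unitary (E →L[ℂ] E)) (x : E) :
    ((u * v : unitary (E →L[ℂ] E)) : E →L[ℂ] E) x
      = (u : E →L[ℂ] E) ((v : E →L[ℂ] E) x) := rfl

lemma u_one_apply (x : E) : ((1 : unitary (E →L[ℂ] E)) : E →L[ℂ] E) x = x := rfl

lemma u_inv_apply (u : unitary (E →L[ℂ] E)) (x : E) :
    ((u⁻¹ : unitary (E →L[ℂ] E)) : E →L[ℂ] E) ((u : E →L[ℂ] E) x) = x := by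
  have h : ((u⁻¹ * u : unitary (E →L[ℂ] E)) : E →L[ℂ] E) x = x := by
    rw [inv_mul_cancel u]; rfl
  exact h

lemma u_apply_inv (u : unitary (E →L[ℂ] E)) (x : E) :
    ((u : unitary (E →L[ℂ] E)) : E →L[ℂ] E) (((u⁻¹ : unitary (E →L[ℂ] E)) : E →L[ℂ] E) x) = x := by
  have h : ((u * u⁻¹ : unitary (E →L[ℂ] E)) : E →L[ℂ] E) x = x := by
    rw [mul_inv_cancel u]; rfl
  exact h

lemma intertwine_zpow (u : unitary (E →L[ℂ] E)) (u' : unitary (E' →L[ℂ] E'))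
    (F : E → E') (hF : ∀ x, F ((u : E →L[ℂ] E) x) = (u' : E' →L[ℂ] E') (F x)) (m : ℤ) :
    ∀ x : E, F (((u ^ m : unitary (E →L[ℂ] E)) : E →L[ℂ] E) x)
      = ((u' ^ m : unitary (E' →L[ℂ] E')) : E' →L[ℂ] E') (F x) := by
  have hinv : ∀ x : E, F (((u⁻¹ : unitary (E →L[ℂ] E)) : E →L[ℂ] E) x)
      = ((u'⁻¹ : unitary (E' →L[ℂ] E')) : E' →L[ℂ] E') (F x) := by
    intro x
    have h1 := hF (((u⁻¹ : unitary (E →L[ℂ] E)) : E →L[ℂ] E) x)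
    rw [u_apply_inv] at h1
    have := congrArg ((u'⁻¹ : unitary (E' →L[ℂ] E')) : E' →L[ℂ] E') h1
    rw [u_inv_apply] at this
    exact this.symm
  induction m using Int.induction_on with
  | zero => intro x; rw [zpow_zero, zpow_zero]; rfl
  | succ k ih =>
    intro x
    have h1 : (u ^ ((k : ℤ) + 1)) = u ^ (k : ℤ) * u := zpow_add_one u k
    have h2 : (u' ^ ((k : ℤ) + 1)) = u' ^ (k : ℤ) * u' := zpow_add_one u' k
    rw [h1, h2, u_mul_apply, u_mul_apply, ← hF, ih]
  | pred k ih =>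
    intro x
    have h1 : (u ^ (-(k : ℤ) - 1)) = u ^ (-(k : ℤ)) * u⁻¹ := zpow_sub_one u (-k)
    have h2 : (u' ^ (-(k : ℤ) - 1)) = u' ^ (-(k : ℤ)) * u'⁻¹ := zpow_sub_one u' (-k)
    rw [h1, h2, u_mul_apply, u_mul_apply, ← hinv, ih]

lemma zpow_family (u : unitary (E →L[ℂ] E)) (x : ℤ → E)
    (h : ∀ k, (u : E →L[ℂ] E) (x k) = x (k + 1)) (m : ℤ) :
    ∀ k, ((u ^ m : unitary (E →L[ℂ] E)) : E →L[ℂ] E) (x k) = x (k + m) := by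
  have hinv : ∀ k, ((u⁻¹ : unitary (E →L[ℂ] E)) : E →L[ℂ] E) (x k) = x (k - 1) := by
    intro k
    have h1 := h (k - 1)
    rw [sub_add_cancel] at h1
    have := congrArg ((u⁻¹ : unitary (E →L[ℂ] E)) : E →L[ℂ] E) h1
    rw [u_inv_apply] at this
    exact this.symm
  induction m using Int.induction_on with
  | zero => intro k; rw [zpow_zero, add_zero]; rfl
  | succ n ih =>
    intro k
    rw [zpow_add_one u n, u_mul_apply, h k, ih (k + 1)]
    congr 1; ring
  | pred n ih =>
    intro k
    rw [zpow_sub_one u (-n), u_mul_apply, hinv k, ih (k - 1)]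
    congr 1; ring

/-- group-theoretic commutation: if `z` is central and `u v = z (v u)` then
`v⁻¹ u^m v = z^m u^m`. -/
lemma conj_zpow_rel {G : Type*} [Group G] (u v z : G)
    (hz : ∀ w : G, Commute z w) (h : u * v = z * (v * u)) (m : ℤ) :
    v⁻¹ * u ^ m * v = z ^ m * u ^ m := by
  have hcom : v⁻¹ * u * v = z * u := by
    rw [mul_assoc, h, ← mul_assoc, ← (hz v⁻¹).eq]
    group
  have h1 : v⁻¹ * u ^ m * v = (v⁻¹ * u * v) ^ m := by
    have := conj_zpow (i := m) (a := v⁻¹) (b := u)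
    rw [inv_inv] at this
    rw [this]
  rw [h1, hcom, ((hz u).mul_zpow m)]

/-- `v⁻¹ * (u^m * v^n) = z^m * (u^m * v^(n-1))`. -/
lemma vinv_mul_rel {G : Type*} [Group G] (u v z : G)
    (hz : ∀ w : G, Commute z w) (h : u * v = z * (v * u)) (m n : ℤ) :
    v⁻¹ * (u ^ m * v ^ n) = z ^ m * (u ^ m * v ^ (n - 1)) := by
  have h1 : v⁻¹ * u ^ m = z ^ m * u ^ m * v⁻¹ := by
    have := conj_zpow_rel u v z hz h m
    rw [← this]; group
  calc v⁻¹ * (u ^ m * v ^ n) = (v⁻¹ * u ^ m) * v ^ n := by rw [mul_assoc]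
    _ = z ^ m * u ^ m * (v⁻¹ * v ^ n) := by rw [h1]; group
    _ = z ^ m * (u ^ m * v ^ (n - 1)) := by
        have : v⁻¹ * v ^ n = v ^ (n - 1) := by group
        rw [this, mul_assoc]

/-- `u⁻¹ * (u^m * v^n) = u^(m-1) * v^n`. -/
lemma uinv_mul_rel {G : Type*} [Group G] (u v : G) (m n : ℤ) :
    u⁻¹ * (u ^ m * v ^ n) = u ^ (m - 1) * v ^ n := by group



variable {I : Type*}
variable {E E' : Type*} [NormedAddCommGroup E] [InnerProductSpace ℂ E] [CompleteSpace E]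
  [NormedAddCommGroup E'] [InnerProductSpace ℂ E'] [CompleteSpace E']

-- [MERGE MARKER]

lemma smul_one_mem_unitary (lam : ℂ) (hlam : ‖lam‖ = 1) :
    lam • (1 : E →L[ℂ] E) ∈ unitary (E →L[ℂ] E) := by
  have hcc : (starRingEnd ℂ) lam * lam = 1 := by
    rw [Complex.conj_mul']; rw [hlam]; norm_num
  have hcc' : lam * (starRingEnd ℂ) lam = 1 := by rw [mul_comm]; exact hcc
  constructor
  · show star (lam • (1 : E →L[ℂ] E)) * (lam • 1) = 1
    rw [star_smul, star_one, smul_mul_smul_comm, one_mul]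
    show ((starRingEnd ℂ) lam * lam) • (1 : E →L[ℂ] E) = 1
    rw [hcc, one_smul]
  · show (lam • (1 : E →L[ℂ] E)) * star (lam • 1) = 1
    rw [star_smul, star_one, smul_mul_smul_comm, one_mul]
    show (lam * (starRingEnd ℂ) lam) • (1 : E →L[ℂ] E) = 1
    rw [hcc', one_smul]


/-- the weighted shift as a unitary operator -/
def wsU (σ : I ≃ I) (c : I → ℂ) (hc : ∀ i, ‖c i‖ = 1) :
    unitary ((lp (fun _ : I => ℂ) 2) →L[ℂ] (lp (fun _ : I => ℂ) 2)) :=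
  Unitary.linearIsometryEquiv.symm (wsE σ c hc)

lemma wsU_coord (σ : I ≃ I) (c : I → ℂ) (hc : ∀ i, ‖c i‖ = 1)
    (g : lp (fun _ : I => ℂ) 2) (i : I) :
    (((wsU σ c hc : unitary _) : lp (fun _ : I => ℂ) 2 →L[ℂ] lp (fun _ : I => ℂ) 2) g : I → ℂ) i
      = c i * g (σ i) := rfl

lemma wsU_single [DecidableEq I] (σ : I ≃ I) (c : I → ℂ) (hc : ∀ i, ‖c i‖ = 1) (i : I) (a : ℂ) :
    ((wsU σ c hc : unitary _) : lp (fun _ : I => ℂ) 2 →L[ℂ] lp (fun _ : I => ℂ) 2)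
        (lp.single 2 i a)
      = lp.single 2 (σ.symm i) (c (σ.symm i) * a) := by
  apply Subtype.ext
  funext j
  rw [wsU_coord]
  by_cases hj : j = σ.symm i
  · subst hj
    rw [Equiv.apply_symm_apply, lp.single_apply_self, lp.single_apply_self]
  · have h1 : σ j ≠ i := fun h => hj (by rw [← h, Equiv.symm_apply_apply])
    rw [lp.single_apply_ne _ _ _ h1, lp.single_apply_ne _ _ _ hj, mul_zero]



set_option maxHeartbeats 2000000


/-- index type -/
abbrev Jt : Type u := ULift.{u} (ℤ × ℤ)

/-- the dilated Hilbert space -/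
abbrev Ht : Type u := lp (fun _ : Jt.{u} => ℂ) 2

def sigU : Jt.{u} ≃ Jt.{u} where
  toFun j := ⟨(j.down.1 - 1, j.down.2)⟩
  invFun j := ⟨(j.down.1 + 1, j.down.2)⟩
  left_inv j := by cases j with | up p => simp
  right_inv j := by cases j with | up p => simp

def sigV : Jt.{u} ≃ Jt.{u} where
  toFun j := ⟨(j.down.1, j.down.2 - 1)⟩
  invFun j := ⟨(j.down.1, j.down.2 + 1)⟩
  left_inv j := by cases j with | up p => simp
  right_inv j := by cases j with | up p => simp

def cU : Jt.{u} → ℂ := fun _ => 1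

def cV (lam : ℂ) : Jt.{u} → ℂ := fun j => (starRingEnd ℂ) lam ^ j.down.1

lemma hcU : ∀ i : Jt.{u}, ‖cU i‖ = 1 := fun _ => by simp [cU]

lemma hcV (lam : ℂ) (hlam : ‖lam‖ = 1) : ∀ i : Jt.{u}, ‖cV lam i‖ = 1 := fun i => by
  simp [cV, norm_zpow, RCLike.norm_conj, hlam]

/-- the dilated unitary `U₁` -/
def U1 : unitary (Ht.{u} →L[ℂ] Ht.{u}) := wsU sigU cU hcU

/-- the dilated unitary `V₁` -/
def V1 (lam : ℂ) (hlam : ‖lam‖ = 1) : unitary (Ht.{u} →L[ℂ] Ht.{u}) :=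
  wsU sigV (cV lam) (hcV lam hlam)

/-- the dilated cyclic vector -/
def xi : Ht.{u} := lp.single 2 ⟨((0:ℤ), (0:ℤ))⟩ 1

lemma lam_ne_zero {lam : ℂ} (hlam : ‖lam‖ = 1) : lam ≠ 0 := by
  intro h; rw [h] at hlam; simp at hlam

lemma conj_lam_ne_zero {lam : ℂ} (hlam : ‖lam‖ = 1) : (starRingEnd ℂ) lam ≠ 0 := by
  simpa using lam_ne_zero (by simpa [RCLike.norm_conj] using hlam)

lemma conj_mul_lam {lam : ℂ} (hlam : ‖lam‖ = 1) : (starRingEnd ℂ) lam * lam = 1 := by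
  rw [Complex.conj_mul', hlam]; norm_num

/-- commutation relation for the dilated pair -/
lemma U1V1_comm (lam : ℂ) (hlam : ‖lam‖ = 1) :
    (U1.{u} : Ht.{u} →L[ℂ] Ht.{u}) * (V1 lam hlam : Ht.{u} →L[ℂ] Ht.{u})
      = lam • ((V1 lam hlam : Ht.{u} →L[ℂ] Ht.{u}) * (U1 : Ht.{u} →L[ℂ] Ht.{u})) := by
  apply ContinuousLinearMap.ext
  intro g
  apply Subtype.ext
  funext j
  have hL : (((U1 : Ht.{u} →L[ℂ] Ht) * (V1 lam hlam : Ht →L[ℂ] Ht)) g : Jt.{u} → ℂ) j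
      = cV lam (sigU j) * g (sigV (sigU j)) := by
    show ((U1 : Ht.{u} →L[ℂ] Ht) ((V1 lam hlam : Ht →L[ℂ] Ht) g) : Jt.{u} → ℂ) j = _
    rw [U1, wsU_coord]
    rw [V1, wsU_coord]
    simp [cU]
  have hR : ((lam • ((V1 lam hlam : Ht.{u} →L[ℂ] Ht) * (U1 : Ht →L[ℂ] Ht))) g : Jt.{u} → ℂ) j
      = lam * (cV lam j * g (sigU (sigV j))) := by
    rw [ContinuousLinearMap.smul_apply, lp.coeFn_smul, Pi.smul_apply, smul_eq_mul]
    congr 1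
    show ((V1 lam hlam : Ht.{u} →L[ℂ] Ht) ((U1 : Ht →L[ℂ] Ht) g) : Jt.{u} → ℂ) j = _
    rw [V1, wsU_coord, U1, wsU_coord]
    simp [cU]
  rw [hL, hR]
  have hsig : sigV (sigU j) = sigU (sigV j) := rfl
  rw [hsig]
  have hcv : cV lam (sigU j) = lam * cV lam j := by
    show (starRingEnd ℂ) lam ^ (j.down.1 - 1) = lam * (starRingEnd ℂ) lam ^ j.down.1
    rw [zpow_sub_one₀ (conj_lam_ne_zero hlam)]
    have hinv : ((starRingEnd ℂ) lam)⁻¹ = lam :=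
      inv_eq_of_mul_eq_one_right (conj_mul_lam hlam)
    rw [hinv, mul_comm]
  rw [hcv, mul_assoc]



set_option maxHeartbeats 2000000


lemma V1_single (lam : ℂ) (hlam : ‖lam‖ = 1) (p : ℤ × ℤ) :
    ((V1 lam hlam : unitary (Ht.{u} →L[ℂ] Ht.{u})) : Ht.{u} →L[ℂ] Ht.{u})
        (lp.single 2 ⟨p⟩ 1)
      = lp.single 2 (⟨(p.1, p.2 + 1)⟩ : Jt.{u}) ((starRingEnd ℂ) lam ^ p.1) := by
  rw [V1, wsU_single]
  congr 1
  show cV lam ⟨(p.1, p.2 + 1)⟩ * 1 = _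
  rw [mul_one]; rfl

lemma U1_single (p : ℤ × ℤ) :
    ((U1.{u} : unitary (Ht.{u} →L[ℂ] Ht.{u})) : Ht.{u} →L[ℂ] Ht.{u}) (lp.single 2 ⟨p⟩ 1)
      = lp.single 2 (⟨(p.1 + 1, p.2)⟩ : Jt.{u}) 1 := by
  rw [U1, wsU_single]
  congr 1
  simp [cU]

lemma gaborVec_U1V1 (lam : ℂ) (hlam : ‖lam‖ = 1) (p : ℤ × ℤ) :
    gaborVec U1.{u} (V1 lam hlam) xi.{u} p = lp.single 2 (⟨p⟩ : Jt.{u}) 1 := by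
  obtain ⟨m, n⟩ := p
  show ((U1.{u} ^ m * V1 lam hlam ^ n : unitary (Ht.{u} →L[ℂ] Ht.{u})) : Ht.{u} →L[ℂ] Ht.{u}) xi
    = _
  rw [u_mul_apply]
  have hV : ((V1 lam hlam ^ n : unitary (Ht.{u} →L[ℂ] Ht.{u})) : Ht.{u} →L[ℂ] Ht.{u}) xi
      = lp.single 2 (⟨((0:ℤ), n)⟩ : Jt.{u}) 1 := by
    have := zpow_family (V1 lam hlam) (fun k => lp.single 2 (⟨((0:ℤ), k)⟩ : Jt.{u}) 1)
      (fun k => by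
        rw [V1_single lam hlam ((0:ℤ), k)]
        norm_num) n 0
    rw [zero_add] at this
    exact this
  rw [hV]
  have := zpow_family U1.{u} (fun k => lp.single 2 (⟨(k, n)⟩ : Jt.{u}) 1)
    (fun k => U1_single (k, n)) m 0
  rw [zero_add] at this
  exact this

lemma orthonormal_gabor (lam : ℂ) (hlam : ‖lam‖ = 1) :
    Orthonormal ℂ (gaborVec U1.{u} (V1 lam hlam) xi.{u}) := by
  rw [orthonormal_iff_ite]
  intro p q
  rw [gaborVec_U1V1 lam hlam p, gaborVec_U1V1 lam hlam q, lp.inner_single_left]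
  by_cases h : p = q
  · subst h
    rw [lp.single_apply_self]
    simp [RCLike.inner_apply]
  · have : (⟨q⟩ : Jt.{u}) ≠ ⟨p⟩ := fun hc => h (congrArg ULift.down hc).symm
    rw [lp.single_apply_ne _ _ _ this.symm]  -- careful direction
    simp [RCLike.inner_apply, h]

lemma dense_gabor (lam : ℂ) (hlam : ‖lam‖ = 1) :
    Dense (↑(Submodule.span ℂ (Set.range (gaborVec U1.{u} (V1 lam hlam) xi.{u}))) :
      Set Ht.{u}) := by
  intro f
  have hsingle : ∀ (j : Jt.{u}) (a : ℂ),
      lp.single 2 j a ∈ Submodule.span ℂ (Set.range (gaborVec U1.{u} (V1 lam hlam) xi.{u})) := by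
    intro j a
    have h1 : lp.single 2 j a = a • (lp.single 2 j (1:ℂ) : Ht.{u}) := by
      rw [← lp.single_smul]
      norm_num
    rw [h1]
    refine Submodule.smul_mem _ _ (Submodule.subset_span ⟨j.down, ?_⟩)
    rw [gaborVec_U1V1 lam hlam]
  have hs := lp.hasSum_single (E := fun _ : Jt.{u} => ℂ) (by norm_num : (2:ℝ≥0∞) ≠ ⊤) f
  refine mem_closure_of_tendsto hs (Filter.Eventually.of_forall fun s => ?_)
  exact Submodule.sum_mem _ fun j _ => hsingle j (f j)



end GaborAux

set_option maxHeartbeats 4000000 in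
/-- **Dilation of Gabor type frames.** A normalized tight frame `{U^m V^n η}` generated by a
Gabor type unitary system dilates to an orthonormal basis `{U₁^m V₁^n ξ}` generated by a
Gabor type unitary system with the same unimodular commutation scalar. -/
theorem gabor_frame_dilation (lam : ℂ) (hlam : ‖lam‖ = 1)
    {H : Type u} [NormedAddCommGroup H] [InnerProductSpace ℂ H] [CompleteSpace H]
    (U V : unitary (H →L[ℂ] H))
    (hUV : (U : H →L[ℂ] H) * (V : H →L[ℂ] H) = lam • ((V : H →L[ℂ] H) * (U : H →L[ℂ] H)))
    (η : H) (hframe : IsNormalizedTightFrame (gaborVec U V η)) :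
    ∃ (H₁ : Type u) (_ : NormedAddCommGroup H₁) (_ : InnerProductSpace ℂ H₁)
      (_ : CompleteSpace H₁) (W : H →ₗᵢ[ℂ] H₁) (U₁ V₁ : unitary (H₁ →L[ℂ] H₁)) (ξ : H₁),
      ((U₁ : H₁ →L[ℂ] H₁) * (V₁ : H₁ →L[ℂ] H₁) =
        lam • ((V₁ : H₁ →L[ℂ] H₁) * (U₁ : H₁ →L[ℂ] H₁))) ∧
      (Orthonormal ℂ (gaborVec U₁ V₁ ξ) ∧
        Dense (↑(Submodule.span ℂ (Set.range (gaborVec U₁ V₁ ξ))) : Set H₁)) ∧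
      (∀ x : H, W ((U : H →L[ℂ] H) x) = (U₁ : H₁ →L[ℂ] H₁) (W x)) ∧
      (∀ x : H, W ((V : H →L[ℂ] H) x) = (V₁ : H₁ →L[ℂ] H₁) (W x)) ∧
      (∀ P : H₁ →L[ℂ] H₁, IsOrthProjectionOnto P (Set.range W) →
        (∀ w : H₁, P ((U₁ : H₁ →L[ℂ] H₁) w) = (U₁ : H₁ →L[ℂ] H₁) (P w)) ∧
        (∀ w : H₁, P ((V₁ : H₁ →L[ℂ] H₁) w) = (V₁ : H₁ →L[ℂ] H₁) (P w)) ∧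
        P ξ = W η ∧
        ∀ m n : ℤ, P (gaborVec U₁ V₁ ξ (m, n)) = W (gaborVec U V η (m, n))) := by
    classical
  have hnl : ‖lam‖ = 1 := by exact hlam
  set v : ℤ × ℤ → H := gaborVec U V η with hv
  -- summability of frame coefficients
  have hsum : ∀ f : H, Summable fun p : ℤ × ℤ => ‖⟪v p, f⟫_ℂ‖ ^ (2:ℕ) := by
    intro f
    by_cases hS : Summable fun p : ℤ × ℤ => ‖⟪v p, f⟫_ℂ‖ ^ (2:ℕ)
    · exact hS
    · exfalso
      have h0 : (∑' p : ℤ × ℤ, ‖⟪v p, f⟫_ℂ‖ ^ (2:ℕ)) = 0 := tsum_eq_zero_of_not_summable hS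
      have h1 := hframe f
      rw [h0] at h1
      have hf0 : f = 0 := by
        have : ‖f‖ = 0 := by
          have := h1.symm
          nlinarith [norm_nonneg f]
        exact norm_eq_zero.mp this
      apply hS
      rw [hf0]
      simp only [inner_zero_right, norm_zero]
      simpa using summable_zero
  have hmem : ∀ f : H, Memℓp (fun j : GaborAux.Jt.{u} => ⟪v j.down, f⟫_ℂ) 2 := by
    intro f
    apply GaborAux.memℓp_two_of_summable
    exact ((Equiv.ulift (α := ℤ × ℤ)).summable_iff
      (f := fun p : ℤ × ℤ => ‖⟪v p, f⟫_ℂ‖ ^ (2:ℕ))).2 (hsum f)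
  -- the isometry W
  let Wl : H →ₗ[ℂ] GaborAux.Ht.{u} :=
    { toFun := fun f => ⟨fun j => ⟪v j.down, f⟫_ℂ, hmem f⟩
      map_add' := fun f g => by
        apply Subtype.ext
        funext j
        rw [lp.coeFn_add, Pi.add_apply]
        exact inner_add_right _ _ _
      map_smul' := fun a f => by
        apply Subtype.ext
        funext j
        rw [RingHom.id_apply, lp.coeFn_smul, Pi.smul_apply, smul_eq_mul]
        exact inner_smul_right _ _ _ }
  have hWl_coord : ∀ (f : H) (j : GaborAux.Jt.{u}),
      ((Wl f : GaborAux.Ht.{u}) : GaborAux.Jt.{u} → ℂ) j = ⟪v j.down, f⟫_ℂ := fun f j => rfl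
  have hWnorm : ∀ f : H, ‖Wl f‖ = ‖f‖ := by
    intro f
    have h2 : ‖Wl f‖ ^ (2:ℕ) = ‖f‖ ^ (2:ℕ) := by
      rw [GaborAux.norm_sq_eq_tsum]
      calc (∑' j : GaborAux.Jt.{u}, ‖((Wl f : GaborAux.Ht.{u}) : GaborAux.Jt.{u} → ℂ) j‖ ^ (2:ℕ))
          = ∑' j : GaborAux.Jt.{u}, ‖⟪v j.down, f⟫_ℂ‖ ^ (2:ℕ) := by
            exact tsum_congr fun j => by rw [hWl_coord]
        _ = ∑' p : ℤ × ℤ, ‖⟪v p, f⟫_ℂ‖ ^ (2:ℕ) :=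
            (Equiv.ulift (α := ℤ × ℤ)).tsum_eq (fun p => ‖⟪v p, f⟫_ℂ‖ ^ (2:ℕ))
        _ = ‖f‖ ^ (2:ℕ) := hframe f
    calc ‖Wl f‖ = Real.sqrt (‖Wl f‖ ^ (2:ℕ)) := (Real.sqrt_sq (norm_nonneg _)).symm
      _ = Real.sqrt (‖f‖ ^ (2:ℕ)) := by rw [h2]
      _ = ‖f‖ := Real.sqrt_sq (norm_nonneg _)
  let W : H →ₗᵢ[ℂ] GaborAux.Ht.{u} := ⟨Wl, hWnorm⟩
  have hW_coord : ∀ (f : H) (j : GaborAux.Jt.{u}),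
      ((W f : GaborAux.Ht.{u}) : GaborAux.Jt.{u} → ℂ) j = ⟪v j.down, f⟫_ℂ := hWl_coord
  -- the central unitary z
  let z : unitary (H →L[ℂ] H) := ⟨lam • 1, GaborAux.smul_one_mem_unitary lam hnl⟩
  have hz : ∀ w : unitary (H →L[ℂ] H), Commute z w := by
    intro w
    apply Subtype.ext
    show (lam • (1 : H →L[ℂ] H)) * (w : H →L[ℂ] H) = (w : H →L[ℂ] H) * (lam • 1)
    rw [smul_mul_assoc, one_mul, mul_smul_comm, mul_one]
  have hrel : U * V = z * (V * U) := by
    apply Subtype.ext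
    show (U : H →L[ℂ] H) * (V : H →L[ℂ] H) = (lam • (1:H →L[ℂ] H)) * ((V : H →L[ℂ] H) * (U : H →L[ℂ] H))
    rw [hUV, smul_mul_assoc, one_mul]
  have hzpow : ∀ (m : ℤ) (x : H), ((z ^ m : unitary (H →L[ℂ] H)) : H →L[ℂ] H) x = lam ^ m • x := by
    intro m x
    have hfam := GaborAux.zpow_family z (fun k => lam ^ k • x)
      (fun k => by
        show (lam • (1 : H →L[ℂ] H)) (lam ^ k • x) = lam ^ (k+1) • x
        rw [ContinuousLinearMap.smul_apply, ContinuousLinearMap.one_apply, smul_smul,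
          zpow_add_one₀ (GaborAux.lam_ne_zero hnl), mul_comm]) m 0
    rw [zero_add] at hfam
    simpa using hfam
  -- key inner product identities
  have hUkey : ∀ (m n : ℤ) (x : H),
      ⟪v (m, n), (U : H →L[ℂ] H) x⟫_ℂ = ⟪v (m - 1, n), x⟫_ℂ := by
    intro m n x
    have h1 : ⟪v (m,n), (U : H →L[ℂ] H) x⟫_ℂ
        = ⟪((U⁻¹ : unitary (H →L[ℂ] H)) : H →L[ℂ] H) (v (m,n)), x⟫_ℂ := by
      calc ⟪v (m,n), (U : H →L[ℂ] H) x⟫_ℂ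
          = ⟪((U⁻¹ : unitary (H →L[ℂ] H)) : H →L[ℂ] H) (v (m,n)),
              ((U⁻¹ : unitary (H →L[ℂ] H)) : H →L[ℂ] H) ((U : H →L[ℂ] H) x)⟫_ℂ :=
            (Unitary.inner_map_map U⁻¹ _ _).symm
        _ = _ := by rw [GaborAux.u_inv_apply]
    rw [h1]
    congr 1
    show ((U⁻¹ : unitary (H →L[ℂ] H)) : H →L[ℂ] H)
        (((U ^ m * V ^ n : unitary (H →L[ℂ] H)) : H →L[ℂ] H) η)
      = ((U ^ (m-1) * V ^ n : unitary (H →L[ℂ] H)) : H →L[ℂ] H) η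
    rw [← GaborAux.u_mul_apply, GaborAux.uinv_mul_rel U V m n]
  have hVkey : ∀ (m n : ℤ) (x : H),
      ⟪v (m, n), (V : H →L[ℂ] H) x⟫_ℂ = (starRingEnd ℂ) lam ^ m * ⟪v (m, n - 1), x⟫_ℂ := by
    intro m n x
    have h1 : ⟪v (m,n), (V : H →L[ℂ] H) x⟫_ℂ
        = ⟪((V⁻¹ : unitary (H →L[ℂ] H)) : H →L[ℂ] H) (v (m,n)), x⟫_ℂ := by
      calc ⟪v (m,n), (V : H →L[ℂ] H) x⟫_ℂ
          = ⟪((V⁻¹ : unitary (H →L[ℂ] H)) : H →L[ℂ] H) (v (m,n)),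
              ((V⁻¹ : unitary (H →L[ℂ] H)) : H →L[ℂ] H) ((V : H →L[ℂ] H) x)⟫_ℂ :=
            (Unitary.inner_map_map V⁻¹ _ _).symm
        _ = _ := by rw [GaborAux.u_inv_apply]
    rw [h1]
    have h2 : ((V⁻¹ : unitary (H →L[ℂ] H)) : H →L[ℂ] H)
        (((U ^ m * V ^ n : unitary (H →L[ℂ] H)) : H →L[ℂ] H) η)
        = lam ^ m • v (m, n - 1) := by
      rw [← GaborAux.u_mul_apply, GaborAux.vinv_mul_rel U V z hz hrel m n,
        GaborAux.u_mul_apply, hzpow]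
      rfl
    show ⟪((V⁻¹ : unitary (H →L[ℂ] H)) : H →L[ℂ] H)
        (((U ^ m * V ^ n : unitary (H →L[ℂ] H)) : H →L[ℂ] H) η), x⟫_ℂ = _
    rw [h2, inner_smul_left, map_zpow₀]
  -- intertwining on single steps
  have hWU : ∀ x : H, W ((U : H →L[ℂ] H) x)
      = ((GaborAux.U1.{u} : unitary (GaborAux.Ht.{u} →L[ℂ] GaborAux.Ht.{u})) :
          GaborAux.Ht.{u} →L[ℂ] GaborAux.Ht.{u}) (W x) := by
    intro x
    apply Subtype.ext
    funext j
    obtain ⟨⟨m, n⟩⟩ := j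
    rw [GaborAux.U1, GaborAux.wsU_coord]
    rw [hW_coord, hW_coord]
    have hs : ((GaborAux.sigU ⟨(m, n)⟩ : GaborAux.Jt.{u})).down = (m - 1, n) := rfl
    have hcu : GaborAux.cU (⟨(m, n)⟩ : GaborAux.Jt.{u}) = 1 := rfl
    rw [hs, hcu, one_mul]
    exact hUkey m n x
  have hWV : ∀ x : H, W ((V : H →L[ℂ] H) x)
      = ((GaborAux.V1 lam hnl : unitary (GaborAux.Ht.{u} →L[ℂ] GaborAux.Ht.{u})) :
          GaborAux.Ht.{u} →L[ℂ] GaborAux.Ht.{u}) (W x) := by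
    intro x
    apply Subtype.ext
    funext j
    obtain ⟨⟨m, n⟩⟩ := j
    rw [GaborAux.V1, GaborAux.wsU_coord]
    rw [hW_coord, hW_coord]
    have hs : ((GaborAux.sigV ⟨(m, n)⟩ : GaborAux.Jt.{u})).down = (m, n - 1) := rfl
    have hcv : GaborAux.cV lam (⟨(m, n)⟩ : GaborAux.Jt.{u}) = (starRingEnd ℂ) lam ^ m := rfl
    rw [hs, hcv]
    exact hVkey m n x
  refine ⟨GaborAux.Ht.{u}, inferInstance, inferInstance, inferInstance, W,
    GaborAux.U1.{u}, GaborAux.V1 lam hnl, GaborAux.xi.{u},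
    GaborAux.U1V1_comm lam hnl,
    ⟨GaborAux.orthonormal_gabor lam hnl, GaborAux.dense_gabor lam hnl⟩,
    hWU, hWV, ?_⟩
  intro P hP
  obtain ⟨hidem, hsa, hrange⟩ := hP
  have hPfix : ∀ x : H, P (W x) = W x := by
    intro x
    have hx : W x ∈ Set.range ⇑P := by rw [hrange]; exact ⟨x, rfl⟩
    obtain ⟨z0, hz0⟩ := hx
    rw [← hz0, hidem]
  have horth : ∀ (g : GaborAux.Ht.{u}) (x : H), ⟪g - P g, W x⟫_ℂ = 0 := by
    intro g x
    rw [inner_sub_left]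
    have h1 : ⟪P g, W x⟫_ℂ = ⟪g, W x⟫_ℂ := by
      rw [hsa g (W x), hPfix]
    rw [h1, sub_self]
  have huniq : ∀ (g y : GaborAux.Ht.{u}), y ∈ Set.range ⇑W →
      (∀ x : H, ⟪g - y, W x⟫_ℂ = 0) → P g = y := by
    intro g y hy hor
    obtain ⟨x₀, rfl⟩ := hy
    have hPg : P g ∈ Set.range ⇑W := by rw [← hrange]; exact ⟨g, rfl⟩
    obtain ⟨s, hs⟩ := hPg
    have hkey : ⟪P g - W x₀, P g - W x₀⟫_ℂ = 0 := by
      have hd : P g - W x₀ = W (s - x₀) := by rw [map_sub, hs]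
      calc ⟪P g - W x₀, P g - W x₀⟫_ℂ = ⟪(P g - g) + (g - W x₀), W (s - x₀)⟫_ℂ := by
            rw [← hd]; congr 1; abel
        _ = ⟪P g - g, W (s - x₀)⟫_ℂ + ⟪g - W x₀, W (s - x₀)⟫_ℂ := inner_add_left _ _ _
        _ = 0 := by
            have h3 : ⟪P g - g, W (s - x₀)⟫_ℂ = 0 := by
              have := horth g (s - x₀)
              rw [show P g - g = -(g - P g) by abel, inner_neg_left, this, neg_zero]
            rw [h3, hor (s - x₀), add_zero]
    have := inner_self_eq_zero.mp hkey
    exact sub_eq_zero.mp this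
  have hPU : ∀ w : GaborAux.Ht.{u},
      P (((GaborAux.U1.{u} : unitary _) : GaborAux.Ht.{u} →L[ℂ] GaborAux.Ht.{u}) w)
      = ((GaborAux.U1.{u} : unitary _) : GaborAux.Ht.{u} →L[ℂ] GaborAux.Ht.{u}) (P w) := by
    intro w
    apply huniq
    · obtain ⟨s, hs⟩ : P w ∈ Set.range ⇑W := by rw [← hrange]; exact ⟨w, rfl⟩
      exact ⟨(U : H →L[ℂ] H) s, by rw [hWU, hs]⟩
    · intro x
      have hx : W x = ((GaborAux.U1.{u} : unitary _) : GaborAux.Ht.{u} →L[ℂ] GaborAux.Ht.{u})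
          (W (((U⁻¹ : unitary (H →L[ℂ] H)) : H →L[ℂ] H) x)) := by
        rw [← hWU, GaborAux.u_apply_inv]
      rw [hx, ← map_sub]
      rw [Unitary.inner_map_map]
      exact horth w _
  have hPV : ∀ w : GaborAux.Ht.{u},
      P (((GaborAux.V1 lam hnl : unitary _) : GaborAux.Ht.{u} →L[ℂ] GaborAux.Ht.{u}) w)
      = ((GaborAux.V1 lam hnl : unitary _) : GaborAux.Ht.{u} →L[ℂ] GaborAux.Ht.{u}) (P w) := by
    intro w
    apply huniq
    · obtain ⟨s, hs⟩ : P w ∈ Set.range ⇑W := by rw [← hrange]; exact ⟨w, rfl⟩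
      exact ⟨(V : H →L[ℂ] H) s, by rw [hWV, hs]⟩
    · intro x
      have hx : W x = ((GaborAux.V1 lam hnl : unitary _) : GaborAux.Ht.{u} →L[ℂ] GaborAux.Ht.{u})
          (W (((V⁻¹ : unitary (H →L[ℂ] H)) : H →L[ℂ] H) x)) := by
        rw [← hWV, GaborAux.u_apply_inv]
      rw [hx, ← map_sub]
      rw [Unitary.inner_map_map]
      exact horth w _
  have hv00 : v (0, 0) = η := by
    show ((U ^ (0:ℤ) * V ^ (0:ℤ) : unitary (H →L[ℂ] H)) : H →L[ℂ] H) η = η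
    rw [zpow_zero, zpow_zero, one_mul]
    rfl
  have hPxi : P GaborAux.xi.{u} = W η := by
    apply huniq
    · exact ⟨η, rfl⟩
    · intro x
      rw [inner_sub_left]
      have h1 : ⟪GaborAux.xi.{u}, W x⟫_ℂ = ⟪η, x⟫_ℂ := by
        rw [GaborAux.xi, lp.inner_single_left]
        have : ((W x : GaborAux.Ht.{u}) : GaborAux.Jt.{u} → ℂ) ⟨((0:ℤ),(0:ℤ))⟩
            = ⟪v (0,0), x⟫_ℂ := hW_coord x _
        rw [RCLike.inner_apply, map_one, mul_one, this, hv00]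
      have h2 : ⟪W η, W x⟫_ℂ = ⟪η, x⟫_ℂ := W.inner_map_map η x
      rw [h1, h2, sub_self]
  refine ⟨hPU, hPV, hPxi, ?_⟩
  intro m n
  show P (((GaborAux.U1.{u} ^ m * GaborAux.V1 lam hnl ^ n : unitary _) :
      GaborAux.Ht.{u} →L[ℂ] GaborAux.Ht.{u}) GaborAux.xi.{u}) = W (v (m, n))
  rw [GaborAux.u_mul_apply]
  rw [GaborAux.intertwine_zpow GaborAux.U1.{u} GaborAux.U1.{u} ⇑P hPU m]
  rw [GaborAux.intertwine_zpow (GaborAux.V1 lam hnl) (GaborAux.V1 lam hnl) ⇑P hPV n]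
  rw [hPxi]
  rw [← GaborAux.intertwine_zpow V (GaborAux.V1 lam hnl) ⇑W hWV n]
  rw [← GaborAux.intertwine_zpow U GaborAux.U1.{u} ⇑W hWU m]
  rw [← GaborAux.u_mul_apply]
  rfl
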